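/- Let S ⊆ {1,…,n} with |S| = k, and suppose there is a nonzero Δ ∈ ℝ^S with A_S Δ = 0 and B_S Δ = 0. Then for any x* supported on S that is feasible for T = {x : ‖y − Ax‖₂ ≤ ε, Bx ≤ b}, there exists a feasible x̄ ∈ T with ‖x̄‖₀ ≤ k − 1 and supp(x̄) ⊆ S. -/

import Mathlib

open Matrix Finset

/-- The ℓ₂ norm of a finite real vector. -/
noncomputable def l2 {ι : Type*} [Fintype ι] (v : ι → ℝ) : ℝ := Real.sqrt (∑ i, v i ^ 2)

/-- The ℓ₀ "norm": number of nonzero components. -/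
noncomputable def l0 {n : ℕ} (x : Fin n → ℝ) : ℕ :=
  (Finset.univ.filter fun i => x i ≠ 0).card

/-- The support of a vector as a finset. -/
noncomputable def spt {n : ℕ} (x : Fin n → ℝ) : Finset (Fin n) :=
  Finset.univ.filter fun i => x i ≠ 0

/-- Membership in the feasible set T = {x : ‖y - Ax‖₂ ≤ ε, Bx ≤ b}. -/
def feasible {m l n : ℕ} (A : Matrix (Fin m) (Fin n) ℝ) (B : Matrix (Fin l) (Fin n) ℝ)
    (y : Fin m → ℝ) (b : Fin l → ℝ) (ε : ℝ) (x : Fin n → ℝ) : Prop :=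
  l2 (y - A.mulVec x) ≤ ε ∧ ∀ i, B.mulVec x i ≤ b i

/-- x is a sparsest solution: feasible and minimizing ‖·‖₀ over T. -/
noncomputable def sparsest {m l n : ℕ} (A : Matrix (Fin m) (Fin n) ℝ)
    (B : Matrix (Fin l) (Fin n) ℝ) (y : Fin m → ℝ) (b : Fin l → ℝ) (ε : ℝ)
    (x : Fin n → ℝ) : Prop :=
  feasible A B y b ε x ∧ ∀ z, feasible A B y b ε z → l0 x ≤ l0 z

/-- Column submatrix indexed by S. -/
def colSub {m n : ℕ} (A : Matrix (Fin m) (Fin n) ℝ) (S : Finset (Fin n)) :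
    Matrix (Fin m) {j // j ∈ S} ℝ :=
  A.submatrix id Subtype.val

/-- Row-and-column submatrix with rows in I and columns in S. -/
def rcSub {l n : ℕ} (B : Matrix (Fin l) (Fin n) ℝ) (I : Finset (Fin l))
    (S : Finset (Fin n)) : Matrix {i // i ∈ I} {j // j ∈ S} ℝ :=
  B.submatrix Subtype.val Subtype.val

/-- Active index set of the constraints Bx ≤ b at x. -/
noncomputable def activeSet {l n : ℕ} (B : Matrix (Fin l) (Fin n) ℝ) (b : Fin l → ℝ)
    (x : Fin n → ℝ) : Finset (Fin l) :=
  Finset.univ.filter fun i => B.mulVec x i = b i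

/-- reduction step — a nonzero common null vector of A_S and B_S lets
us sparsify any feasible point supported on S. -/
theorem stmt12 {m l n : ℕ} (A : Matrix (Fin m) (Fin n) ℝ) (B : Matrix (Fin l) (Fin n) ℝ)
    (y : Fin m → ℝ) (b : Fin l → ℝ) (ε : ℝ) (hε : 0 ≤ ε)
    (S : Finset (Fin n)) (k : ℕ) (hcard : S.card = k)
    (Δ : {j // j ∈ S} → ℝ) (hΔ : Δ ≠ 0)
    (hAΔ : (colSub A S).mulVec Δ = 0) (hBΔ : (colSub B S).mulVec Δ = 0)
    (xs : Fin n → ℝ) (hsupp : spt xs ⊆ S) (hfeas : feasible A B y b ε xs) :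
    ∃ xb : Fin n → ℝ, feasible A B y b ε xb ∧ l0 xb ≤ k - 1 ∧ spt xb ⊆ S := by

  classical
  obtain ⟨j, hj⟩ := Function.ne_iff.mp hΔ
  simp only [Pi.zero_apply] at hj
  set d : Fin n → ℝ := fun i => if h : i ∈ S then Δ ⟨i, h⟩ else 0 with hd
  set c : ℝ := xs j.val / Δ j with hc
  have key : ∀ {p : ℕ} (M : Matrix (Fin p) (Fin n) ℝ),
      (colSub M S).mulVec Δ = 0 → M.mulVec d = 0 := by
    intro p M hM
    funext i
    have h1 := congrFun hM i
    simp only [colSub, Matrix.mulVec, dotProduct, Matrix.submatrix_apply, id,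
      Pi.zero_apply] at h1 ⊢
    calc ∑ x : Fin n, M i x * d x
        = ∑ x ∈ S, M i x * d x := by
          refine (Finset.sum_subset (Finset.subset_univ S) ?_).symm
          intro x _ hx
          simp [hd, hx]
      _ = ∑ x ∈ S.attach, M i x.val * Δ x := by
          rw [← Finset.sum_attach S (fun x => M i x * d x)]
          refine Finset.sum_congr rfl fun x _ => ?_
          simp [hd, x.2]
      _ = 0 := h1
  have hAd : A.mulVec d = 0 := key A hAΔ
  have hBd : B.mulVec d = 0 := key B hBΔ
  refine ⟨xs - c • d, ?_, ?_, ?_⟩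
  · have hmv : ∀ {p : ℕ} (M : Matrix (Fin p) (Fin n) ℝ), M.mulVec d = 0 →
        M.mulVec (xs - c • d) = M.mulVec xs := by
      intro p M h
      rw [Matrix.mulVec_sub, Matrix.mulVec_smul, h]
      simp
    constructor
    · rw [hmv A hAd]; exact hfeas.1
    · intro i; rw [hmv B hBd]; exact hfeas.2 i
  · have hsub : spt (xs - c • d) ⊆ S.erase j.val := by
      intro i hi
      simp only [spt, Finset.mem_filter, Finset.mem_univ, true_and] at hi
      by_cases hiS : i ∈ S
      · rcases eq_or_ne i j.val with rfl | hne
        · exfalso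
          apply hi
          simp only [Pi.sub_apply, Pi.smul_apply, smul_eq_mul, hd]
          rw [dif_pos hiS]
          have : (⟨j.val, hiS⟩ : {x // x ∈ S}) = j := Subtype.ext rfl
          rw [this, hc]
          field_simp [hj]
          simp
        · exact Finset.mem_erase.mpr ⟨hne, hiS⟩
      · exfalso
        apply hi
        have hx0 : xs i = 0 := by
          by_contra h0
          exact hiS (hsupp (by simp [spt, h0]))
        simp [hd, hiS, hx0]
    calc l0 (xs - c • d) ≤ (S.erase j.val).card := Finset.card_le_card hsub
      _ = k - 1 := by rw [Finset.card_erase_of_mem j.2, hcard]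
  · intro i hi
    simp only [spt, Finset.mem_filter, Finset.mem_univ, true_and] at hi
    by_contra hiS
    apply hi
    have hx0 : xs i = 0 := by
      by_contra h0
      exact hiS (hsupp (by simp [spt, h0]))
    simp [hd, hiS, hx0]
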